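/- Let G be a real polynomial with only real zeros and deg G ≥ n ≥ 1, let a₁,…,aₙ > 0 and A > 0. If Pₙ(-iA; x₁,…,xₙ) = 0 and |xₖ| ≤ 1 for k = 1,…,n-1, then |xₙ| > 1, where Pₙ(s; x) = Σ_{S ⊆ {1,…,n}} G(s - Σ_{k∉S} i aₖ + Σ_{ℓ∈S} i a_ℓ)·Π_{ℓ∈S} x_ℓ. -/

import Mathlib

open Complex Polynomial Finset

namespace PnAux

lemma prod_map_lt {g h : ℂ → ℝ} :
    ∀ (M : Multiset ℂ), (∀ r ∈ M, 0 ≤ g r ∧ g r < h r) → M ≠ 0 →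
    (M.map g).prod < (M.map h).prod := by
  intro M
  induction M using Multiset.induction with
  | empty => intro _ hM; exact absurd rfl hM
  | cons r M ih =>
    intro hyp _
    rcases eq_or_ne M 0 with rfl | hM
    · simpa using (hyp r (by simp)).2
    · simp only [Multiset.map_cons, Multiset.prod_cons]
      refine mul_lt_mul'' (hyp r (by simp)).2
        (ih (fun z hz => hyp z (by simp [hz])) hM) (hyp r (by simp)).1 ?_
      refine Multiset.prod_nonneg ?_
      intro y hy
      obtain ⟨z, hz, rfl⟩ := Multiset.mem_map.1 hy
      exact (hyp z (by simp [hz])).1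

lemma factor_lt {s r : ℂ} {a : ℝ} (hs : s.im < 0) (hr : 0 ≤ r.im) (ha : 0 < a) :
    ‖s + I * a - r‖ < ‖s - I * a - r‖ := by
  have h1 : (‖s + I * a - r‖) ^ 2 < (‖s - I * a - r‖) ^ 2 := by
    rw [Complex.sq_norm, Complex.sq_norm, Complex.normSq_apply, Complex.normSq_apply]
    simp only [Complex.sub_re, Complex.add_re, Complex.mul_re, Complex.I_re, Complex.I_im,
      Complex.ofReal_re, Complex.ofReal_im, Complex.sub_im, Complex.add_im, Complex.mul_im]
    nlinarith
  exact lt_of_pow_lt_pow_left₀ 2 (norm_nonneg _) h1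

lemma abs_eval_lt {f : ℂ[X]} (hf : f ≠ 0) (hd : 1 ≤ f.natDegree)
    (hroots : ∀ z : ℂ, f.eval z = 0 → 0 ≤ z.im) {s : ℂ} (hs : s.im < 0) {a : ℝ} (ha : 0 < a) :
    ‖f.eval (s + I * a)‖ < ‖f.eval (s - I * a)‖ := by
  have hsplit : f.Splits := IsAlgClosed.splits f
  have hfac := hsplit.eq_prod_roots
  have hcard : Multiset.card f.roots = f.natDegree := splits_iff_card_roots.1 hsplit
  have hMne : f.roots ≠ 0 := by
    intro h
    rw [h] at hcard
    simp at hcard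
    omega
  have key : ∀ z : ℂ, ‖f.eval z‖ =
      ‖f.leadingCoeff‖ * (f.roots.map (fun r => ‖z - r‖)).prod := by
    intro z
    conv_lhs => rw [hfac]
    rw [eval_mul, eval_C, norm_mul, eval_multiset_prod, Multiset.map_map,
      (show ∀ m : Multiset ℂ, ‖m.prod‖ = (m.map (‖·‖)).prod from
        fun m => map_multiset_prod (normHom : ℂ →*₀ ℝ) m), Multiset.map_map]
    refine congrArg _ (congrArg _ (Multiset.map_congr rfl ?_))
    intro r _
    simp
  rw [key, key]
  refine mul_lt_mul_of_pos_left ?_ (by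
    simpa using (norm_pos_iff.2 (leadingCoeff_ne_zero.2 hf)))
  refine prod_map_lt f.roots ?_ hMne
  intro r hr
  have hr0 : 0 ≤ r.im := hroots r (mem_roots'.1 hr).2
  exact ⟨norm_nonneg _, factor_lt hs hr0 ha⟩

noncomputable def Tk (a : ℝ) (x : ℂ) (f : ℂ[X]) : ℂ[X] :=
  taylor (-(I * a)) f + C x * taylor (I * a) f

lemma Tk_eval (a : ℝ) (x : ℂ) (f : ℂ[X]) (s : ℂ) :
    (Tk a x f).eval s = f.eval (s - I * a) + x * f.eval (s + I * a) := by
  simp [Tk, taylor_eval, sub_eq_add_neg]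

lemma Tk_root {f : ℂ[X]} (hf : f ≠ 0) (hd : 1 ≤ f.natDegree)
    (hroots : ∀ z : ℂ, f.eval z = 0 → 0 ≤ z.im) {a : ℝ} (ha : 0 < a) {x : ℂ}
    (hx : ‖x‖ ≤ 1) :
    ∀ z : ℂ, (Tk a x f).eval z = 0 → 0 ≤ z.im := by
  intro z hz
  by_contra h
  push_neg at h
  rw [Tk_eval] at hz
  have hlt := abs_eval_lt hf hd hroots h ha
  have heq : f.eval (z - I * a) = -(x * f.eval (z + I * a)) :=
    eq_neg_of_add_eq_zero_left hz
  have habs : ‖f.eval (z - I * a)‖ =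
      ‖x‖ * ‖f.eval (z + I * a)‖ := by
    rw [heq, norm_neg, norm_mul]
  nlinarith [norm_nonneg (f.eval (z + I * a)), norm_nonneg x]

lemma Tk_ne_zero {f : ℂ[X]} (hf : f ≠ 0) (hd : 1 ≤ f.natDegree)
    (hroots : ∀ z : ℂ, f.eval z = 0 → 0 ≤ z.im) {a : ℝ} (ha : 0 < a) {x : ℂ}
    (hx : ‖x‖ ≤ 1) : Tk a x f ≠ 0 := by
  intro h0
  have := Tk_root hf hd hroots ha hx (-I) (by rw [h0]; simp)
  simp at this
  linarith

lemma hasseDeriv_top {f : ℂ[X]} :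
    hasseDeriv f.natDegree f = C f.leadingCoeff := by
  ext m
  rw [hasseDeriv_coeff, coeff_C]
  rcases Nat.eq_zero_or_pos m with rfl | hm
  · rw [if_pos rfl, zero_add, Nat.choose_self, Nat.cast_one, one_mul, leadingCoeff]
  · rw [if_neg (by omega), coeff_eq_zero_of_natDegree_lt (by omega)]
    ring

lemma hasseDeriv_next {f : ℂ[X]} (hd : 1 ≤ f.natDegree) :
    hasseDeriv (f.natDegree - 1) f =
      C (f.coeff (f.natDegree - 1)) + C ((f.natDegree : ℂ) * f.leadingCoeff) * X := by
  ext m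
  rw [hasseDeriv_coeff]
  match m with
  | 0 =>
    rw [zero_add, Nat.choose_self, Nat.cast_one, one_mul, coeff_add, coeff_C_zero,
      coeff_C_mul, coeff_X_zero, mul_zero, add_zero]
  | 1 =>
    have h1 : 1 + (f.natDegree - 1) = f.natDegree := by omega
    rw [h1]
    have h2 : f.natDegree.choose (f.natDegree - 1) = f.natDegree := by
      rw [← Nat.choose_symm (by omega : f.natDegree - 1 ≤ f.natDegree),
        (by omega : f.natDegree - (f.natDegree - 1) = 1), Nat.choose_one_right]
    rw [h2, coeff_add, coeff_C, if_neg one_ne_zero, coeff_C_mul, coeff_X_one, mul_one,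
      zero_add, leadingCoeff]
  | (k + 2) =>
    rw [coeff_eq_zero_of_natDegree_lt (by omega)]
    simp only [coeff_add, coeff_C, coeff_C_mul, coeff_X]
    rw [if_neg (by omega), if_neg (by omega)]
    ring

lemma Tk_deg {f : ℂ[X]} (hf : f ≠ 0) (hd : 1 ≤ f.natDegree) {a : ℝ} (ha : a ≠ 0) (x : ℂ) :
    f.natDegree ≤ (Tk a x f).natDegree + 1 := by
  have hlc : f.leadingCoeff ≠ 0 := leadingCoeff_ne_zero.2 hf
  rcases eq_or_ne x (-1) with rfl | hx1
  · -- degree can drop by one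
    have hco : (Tk a (-1) f).coeff (f.natDegree - 1) =
        -2 * (f.natDegree : ℂ) * f.leadingCoeff * (I * a) := by
      simp only [Tk, coeff_add, coeff_C_mul, taylor_coeff, hasseDeriv_next hd]
      simp only [eval_add, eval_mul, eval_C, eval_X]
      ring
    have hne : (Tk a (-1) f).coeff (f.natDegree - 1) ≠ 0 := by
      rw [hco]
      have hdne : (f.natDegree : ℂ) ≠ 0 := Nat.cast_ne_zero.2 (by omega)
      have hIa : I * (a : ℂ) ≠ 0 :=
        mul_ne_zero I_ne_zero ((Complex.ofReal_ne_zero).2 ha)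
      exact mul_ne_zero (mul_ne_zero (mul_ne_zero (by norm_num) hdne) hlc) hIa
    have := le_natDegree_of_ne_zero hne
    omega
  · have hco : (Tk a x f).coeff f.natDegree = (1 + x) * f.leadingCoeff := by
      simp only [Tk, coeff_add, coeff_C_mul, taylor_coeff, hasseDeriv_top]
      simp only [eval_C]
      ring
    have hne : (Tk a x f).coeff f.natDegree ≠ 0 := by
      rw [hco]
      refine mul_ne_zero ?_ hlc
      intro h
      apply hx1
      linear_combination h
    have := le_natDegree_of_ne_zero hne
    omega

variable {m : ℕ}

noncomputable def PW (Gc : ℂ[X]) (a : Fin m → ℝ) (x : Fin m → ℂ) (U : Finset (Fin m)) : ℂ[X] :=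
  ∑ S ∈ U.powerset, C (∏ ℓ ∈ S, x ℓ) *
    taylor (-(I * ∑ k ∈ U \ S, (a k : ℂ)) + I * ∑ ℓ ∈ S, (a ℓ : ℂ)) Gc

lemma PW_empty (Gc : ℂ[X]) (a : Fin m → ℝ) (x : Fin m → ℂ) : PW Gc a x ∅ = Gc := by
  simp [PW, taylor_zero]

lemma PW_insert (Gc : ℂ[X]) (a : Fin m → ℝ) (x : Fin m → ℂ) {j : Fin m} {U : Finset (Fin m)}
    (hj : j ∉ U) :
    PW Gc a x (insert j U) = Tk (a j) (x j) (PW Gc a x U) := by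
  rw [PW, Finset.sum_powerset_insert hj, Tk, PW, map_sum, map_sum, Finset.mul_sum]
  congr 1
  · refine Finset.sum_congr rfl ?_
    intro S hS
    have hSU : S ⊆ U := Finset.mem_powerset.1 hS
    have hjS : j ∉ S := fun h => hj (hSU h)
    rw [taylor_mul, taylor_C, taylor_taylor]
    have h1 : insert j U \ S = insert j (U \ S) := by
      ext k
      simp only [Finset.mem_sdiff, Finset.mem_insert]
      constructor
      · rintro ⟨h | h, h2⟩
        · exact Or.inl h
        · exact Or.inr ⟨h, h2⟩
      · rintro (rfl | ⟨h, h2⟩)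
        · exact ⟨Or.inl rfl, hjS⟩
        · exact ⟨Or.inr h, h2⟩
    have h2 : j ∉ U \ S := fun h => hj (Finset.mem_sdiff.1 h).1
    rw [h1, Finset.sum_insert h2]
    have h3 : -(I * ((a j : ℂ) + ∑ k ∈ U \ S, (a k : ℂ))) + I * ∑ ℓ ∈ S, (a ℓ : ℂ) =
        -(I * (a j : ℂ)) + (-(I * ∑ k ∈ U \ S, (a k : ℂ)) + I * ∑ ℓ ∈ S, (a ℓ : ℂ)) := by
      ring
    rw [h3]
  · refine Finset.sum_congr rfl ?_
    intro S hS
    have hSU : S ⊆ U := Finset.mem_powerset.1 hS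
    have hjS : j ∉ S := fun h => hj (hSU h)
    rw [taylor_mul, taylor_C, taylor_taylor, Finset.prod_insert hjS, map_mul, ← mul_assoc]
    have h1 : insert j U \ insert j S = U \ S := by
      ext k
      simp only [Finset.mem_sdiff, Finset.mem_insert, not_or]
      constructor
      · rintro ⟨h | h, h2, h3⟩
        · exact absurd h h2
        · exact ⟨h, h3⟩
      · rintro ⟨h, h2⟩
        exact ⟨Or.inr h, fun hk => hj (hk ▸ h), h2⟩
    rw [h1, Finset.sum_insert hjS]
    have h3 : -(I * ∑ k ∈ U \ S, (a k : ℂ)) + I * ((a j : ℂ) + ∑ ℓ ∈ S, (a ℓ : ℂ)) =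
        I * (a j : ℂ) + (-(I * ∑ k ∈ U \ S, (a k : ℂ)) + I * ∑ ℓ ∈ S, (a ℓ : ℂ)) := by
      ring
    rw [h3]

lemma PW_inv (Gc : ℂ[X]) (hroots : ∀ z : ℂ, Gc.eval z = 0 → 0 ≤ z.im)
    (a : Fin m → ℝ) (ha : ∀ k, 0 < a k) (x : Fin m → ℂ) (U : Finset (Fin m)) :
    (∀ k ∈ U, ‖x k‖ ≤ 1) → U.card + 1 ≤ Gc.natDegree →
    PW Gc a x U ≠ 0 ∧ (∀ z : ℂ, (PW Gc a x U).eval z = 0 → 0 ≤ z.im) ∧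
      Gc.natDegree ≤ (PW Gc a x U).natDegree + U.card := by
  induction U using Finset.induction with
  | empty =>
    intro _ hdeg
    rw [PW_empty]
    refine ⟨fun h => by simp [h] at hdeg, hroots, by simp⟩
  | @insert j U hj ih =>
    intro hxU hdeg
    rw [Finset.card_insert_of_notMem hj] at hdeg
    obtain ⟨h0, hr, hdU⟩ := ih (fun k hk => hxU k (Finset.mem_insert_of_mem hk)) (by omega)
    have hd1 : 1 ≤ (PW Gc a x U).natDegree := by omega
    have hxj : ‖x j‖ ≤ 1 := hxU j (Finset.mem_insert_self j U)
    rw [PW_insert Gc a x hj]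
    refine ⟨Tk_ne_zero h0 hd1 hr (ha j) hxj, Tk_root h0 hd1 hr (ha j) hxj, ?_⟩
    have := Tk_deg h0 hd1 (ne_of_gt (ha j)) (x j)
    rw [Finset.card_insert_of_notMem hj]
    omega

end PnAux

theorem Pn_key_proposition_neg (n : ℕ) (G : Polynomial ℝ)
    (hroots : ∀ z : ℂ, (G.map (algebraMap ℝ ℂ)).eval z = 0 → z.im = 0)
    (hdeg : n + 1 ≤ G.natDegree)
    (a : Fin (n + 1) → ℝ) (ha : ∀ k, 0 < a k)
    (A : ℝ) (hA : 0 < A)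
    (x : Fin (n + 1) → ℂ)
    (hP : ∑ S : Finset (Fin (n + 1)),
        (G.map (algebraMap ℝ ℂ)).eval
          (-(I * A) - I * (∑ k ∈ Sᶜ, (a k : ℂ)) + I * (∑ ℓ ∈ S, (a ℓ : ℂ)))
        * ∏ ℓ ∈ S, x ℓ = 0)
    (hx : ∀ k : Fin n, ‖x k.castSucc‖ ≤ 1) :
    1 < ‖x (Fin.last n)‖ := by
  classical
  set Gc : Polynomial ℂ := G.map (algebraMap ℝ ℂ) with hGc
  have hGdeg : Gc.natDegree = G.natDegree := natDegree_map_eq_of_injective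
    (algebraMap ℝ ℂ).injective G
  have hroots' : ∀ z : ℂ, Gc.eval z = 0 → 0 ≤ z.im := fun z hz => le_of_eq (hroots z hz).symm
  set U₀ : Finset (Fin (n + 1)) := Finset.univ.erase (Fin.last n) with hU₀
  have hcard : U₀.card = n := by
    rw [hU₀, Finset.card_erase_of_mem (Finset.mem_univ _), Finset.card_univ]
    simp
  have hxU : ∀ k ∈ U₀, ‖x k‖ ≤ 1 := by
    intro k hk
    have hkne : k ≠ Fin.last n := (Finset.mem_erase.1 hk).1
    obtain ⟨j, rfl⟩ := Fin.eq_castSucc_of_ne_last hkne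
    exact hx j
  obtain ⟨h0, hr, hdU⟩ := PnAux.PW_inv Gc hroots' a ha x U₀ hxU
    (by rw [hcard, hGdeg]; exact hdeg)
  set f := PnAux.PW Gc a x U₀ with hf
  have hd1 : 1 ≤ f.natDegree := by
    rw [hGdeg] at hdU
    omega
  have huniv : (Finset.univ : Finset (Fin (n + 1))) = insert (Fin.last n) U₀ :=
    (Finset.insert_erase (Finset.mem_univ _)).symm
  set s₀ : ℂ := -(I * (A : ℂ)) with hs₀
  have hs₀im : s₀.im < 0 := by
    rw [hs₀]
    simp [hA]
  have hPeq : (PnAux.PW Gc a x Finset.univ).eval s₀ = 0 := by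
    rw [PnAux.PW, eval_finset_sum]
    rw [← hP]
    rw [Finset.powerset_univ]
    refine Finset.sum_congr rfl ?_
    intro S _
    rw [eval_mul, eval_C, taylor_eval, mul_comm]
    congr 2
    rw [Finset.compl_eq_univ_sdiff]
    ring
  rw [huniv, PnAux.PW_insert Gc a x (by simp [hU₀]), PnAux.Tk_eval] at hPeq
  have hlt := PnAux.abs_eval_lt h0 hd1 hr hs₀im (ha (Fin.last n))
  have heq : f.eval (s₀ - I * (a (Fin.last n))) =
      -(x (Fin.last n) * f.eval (s₀ + I * (a (Fin.last n)))) :=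
    eq_neg_of_add_eq_zero_left hPeq
  have habs : ‖f.eval (s₀ - I * (a (Fin.last n)))‖ =
      ‖x (Fin.last n)‖ * ‖f.eval (s₀ + I * (a (Fin.last n)))‖ := by
    rw [heq, norm_neg, norm_mul]
  by_contra hcon
  push_neg at hcon
  nlinarith [norm_nonneg (f.eval (s₀ + I * (a (Fin.last n)))),
    norm_nonneg (x (Fin.last n))]
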